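/- Interior propagation of the interface condition, full statement: suppose N, E ⊆ ℝ^{d−1} with N closed, and there exist c₀ ∈ (0,1), c₁ > 0 such that for all y ∈ E and s ∈ (0,1], λ_{d−1}({z ∈ B_s(y) : dist(z, N) > c₀ s}) ≥ c₁ s^{d−1}. Let y ∈ ℝ^{d−1} be a point with ε := dist(y, N) > 0 and suppose there exists y* ∈ E with |y − y*| = ε. Then with ĉ₀ := min{1/4, c₀/2} and ĉ₁ := min{ω_{d−1}/4^{d−1}, c₁/2^{d−1}}, for all s ∈ (0,1]: λ_{d−1}({z ∈ B_s(y) : dist(z, N) > ĉ₀ s}) ≥ ĉ₁ s^{d−1}. -/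

import Mathlib

open Metric MeasureTheory Set

theorem stmt10 {m : ℕ} (hm : 1 ≤ m)
    (N E : Set (EuclideanSpace ℝ (Fin m))) (hNcl : IsClosed N) (hN : N.Nonempty)
    (c₀ c₁ : ℝ) (hc₀ : 0 < c₀) (hc₀1 : c₀ < 1) (hc₁ : 0 < c₁)
    (hE : ∀ y ∈ E, ∀ s : ℝ, 0 < s → s ≤ 1 →
      ENNReal.ofReal (c₁ * s ^ m) ≤
        volume (ball y s ∩ {z | c₀ * s < infDist z N}))
    (y ystar : EuclideanSpace ℝ (Fin m))
    (hε : 0 < infDist y N) (hystar : ystar ∈ E)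
    (hdist : dist y ystar = infDist y N) :
    ∀ s : ℝ, 0 < s → s ≤ 1 →
      ENNReal.ofReal
          (min ((volume (ball (0 : EuclideanSpace ℝ (Fin m)) 1)).toReal / 4 ^ m)
            (c₁ / 2 ^ m) * s ^ m) ≤
        volume (ball y s ∩ {z | min (1 / 4) (c₀ / 2) * s < infDist z N}) := by
  intro s hs hs1
  set ε := infDist y N with hεdef
  set ω := volume (ball (0 : EuclideanSpace ℝ (Fin m)) 1) with hω
  have hωfin : ω ≠ ⊤ := measure_ball_lt_top.ne
  have hCle1 : min ((ω).toReal / 4 ^ m) (c₁ / 2 ^ m) ≤ ω.toReal / 4 ^ m :=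
    min_le_left _ _
  have hCle2 : min ((ω).toReal / 4 ^ m) (c₁ / 2 ^ m) ≤ c₁ / 2 ^ m :=
    min_le_right _ _
  have hcle1 : min (1/4 : ℝ) (c₀/2) ≤ 1/4 := min_le_left _ _
  have hcle2 : min (1/4 : ℝ) (c₀/2) ≤ c₀/2 := min_le_right _ _
  haveI : NeZero m := ⟨by omega⟩
  haveI : Nontrivial (EuclideanSpace ℝ (Fin m)) := by
    have : (0 : EuclideanSpace ℝ (Fin m)) ≠ EuclideanSpace.single ⟨0, by omega⟩ (1:ℝ) := by
      intro hzero
      have := congrArg (fun v : EuclideanSpace ℝ (Fin m) => v ⟨0, by omega⟩) hzero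
      simp [EuclideanSpace.single] at this
    exact ⟨_, _, this⟩
  by_cases h : s ≤ 2 * ε
  · -- small radius: the ball of radius s/4 around y is inside the target set
    have hsub : ball y (s/4) ⊆ ball y s ∩ {z | min (1/4 : ℝ) (c₀/2) * s < infDist z N} := by
      intro z hz
      rw [mem_ball] at hz
      refine ⟨mem_ball.2 (lt_of_lt_of_le hz (by linarith)), ?_⟩
      have h1 : ε ≤ infDist z N + dist y z := infDist_le_infDist_add_dist
      have h2 : dist y z < s/4 := by rwa [dist_comm]
      have h3 : min (1/4 : ℝ) (c₀/2) * s ≤ s/4 := by nlinarith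
      simp only [mem_setOf_eq]
      linarith
    calc ENNReal.ofReal (min ((ω).toReal / 4 ^ m) (c₁ / 2 ^ m) * s ^ m)
        ≤ volume (ball y (s/4)) := by
          have hfr : Module.finrank ℝ (EuclideanSpace ℝ (Fin m)) = m := finrank_euclideanSpace_fin
          have hball : volume (ball y (s/4)) = ENNReal.ofReal ((s/4) ^ m) * ω := by
            rw [Measure.addHaar_ball volume y (by positivity : (0:ℝ) ≤ s/4), hfr]
          rw [hball]
          calc ENNReal.ofReal (min ((ω).toReal / 4 ^ m) (c₁ / 2 ^ m) * s ^ m)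
              ≤ ENNReal.ofReal ((s/4) ^ m * (ω).toReal) := by
                apply ENNReal.ofReal_le_ofReal
                rw [div_pow]
                calc min ((ω).toReal / 4 ^ m) (c₁ / 2 ^ m) * s ^ m
                    ≤ (ω).toReal / 4 ^ m * s ^ m :=
                      mul_le_mul_of_nonneg_right hCle1 (by positivity)
                  _ = s ^ m / 4 ^ m * (ω).toReal := by ring
            _ = ENNReal.ofReal ((s/4) ^ m) * ω := by
                rw [ENNReal.ofReal_mul (by positivity), ENNReal.ofReal_toReal hωfin]
      _ ≤ _ := measure_mono hsub
  · -- large radius: use the hypothesis at ystar with radius s - ε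
    push_neg at h
    have hεs : ε < s := by linarith
    have hsε : 0 < s - ε := by linarith
    have hsε1 : s - ε ≤ 1 := by linarith
    have key := hE ystar hystar (s - ε) hsε hsε1
    have hsub : ball ystar (s - ε) ∩ {z | c₀ * (s - ε) < infDist z N}
        ⊆ ball y s ∩ {z | min (1/4 : ℝ) (c₀/2) * s < infDist z N} := by
      rintro z ⟨hz1, hz2⟩
      rw [mem_ball] at hz1
      constructor
      · rw [mem_ball]
        calc dist z y ≤ dist z ystar + dist ystar y := dist_triangle _ _ _
          _ < (s - ε) + ε := by
              rw [dist_comm ystar y, hdist]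
              linarith
          _ = s := by ring
      · simp only [mem_setOf_eq] at hz2 ⊢
        have : min (1/4 : ℝ) (c₀/2) * s ≤ c₀ * (s/2) := by nlinarith
        have h2 : c₀ * (s/2) < c₀ * (s - ε) := by nlinarith
        linarith
    calc ENNReal.ofReal (min ((ω).toReal / 4 ^ m) (c₁ / 2 ^ m) * s ^ m)
        ≤ ENNReal.ofReal (c₁ * (s - ε) ^ m) := by
          apply ENNReal.ofReal_le_ofReal
          have h5 : (s/2) ^ m ≤ (s - ε) ^ m :=
            pow_le_pow_left₀ (by positivity) (by linarith) m
          calc min ((ω).toReal / 4 ^ m) (c₁ / 2 ^ m) * s ^ m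
              ≤ c₁ / 2 ^ m * s ^ m := by
                apply mul_le_mul_of_nonneg_right hCle2 (by positivity)
            _ = c₁ * (s/2) ^ m := by rw [div_pow]; ring
            _ ≤ c₁ * (s - ε) ^ m := by
                apply mul_le_mul_of_nonneg_left h5 hc₁.le
      _ ≤ volume (ball ystar (s - ε) ∩ {z | c₀ * (s - ε) < infDist z N}) := key
      _ ≤ _ := measure_mono hsub
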